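/- Let κ be an uncountable cardinal with κ^{<κ} = κ and let L be a linear order of cardinality κ that is κ-universal (every linear order of cardinality strictly less than κ order-embeds into L) and κ-ultrahomogeneous (every order isomorphism between two subsets of L of cardinality strictly less than κ extends to an order automorphism of L). Then Aut(L) is not universal: there exists a subset Q ⊆ L whose induced linear order is order-isomorphic to (ℚ,<) and such that there is no injective continuous group homomorphism from the group of order automorphisms of the induced order on Q into Aut(L). -/

import Mathlib

/-- The topology of pointwise convergence on the permutation group of a set `V`
(regarded as a discrete space): the topology induced from the product topology
on `V → V` where `V` carries the discrete topology. -/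
instance permPointwiseTopology (V : Type*) : TopologicalSpace (Equiv.Perm V) :=
  TopologicalSpace.induced (fun g : Equiv.Perm V => (g : V → V))
    (@Pi.topologicalSpace V (fun _ => V) (fun _ => ⊥))

/-- The automorphism group of a binary relational structure `(V, r)`, realized as the
subgroup of `Equiv.Perm V` of permutations preserving the relation `r` in both directions. -/
def relAut {V : Type*} (r : V → V → Prop) : Subgroup (Equiv.Perm V) where
  carrier := {g : Equiv.Perm V | ∀ x y : V, r (g x) (g y) ↔ r x y}
  one_mem' := fun _ _ => Iff.rfl
  mul_mem' := by
    intro a b ha hb x y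
    exact (ha (b x) (b y)).trans (hb x y)
  inv_mem' := by
    intro a ha x y
    have h := (ha (a⁻¹ x) (a⁻¹ y)).symm
    simpa using h

set_option linter.unusedSectionVars false
set_option linter.unusedVariables false
set_option maxHeartbeats 1000000


namespace NotUniv

/-- piecewise linear up-mover: identity outside `(a,b)`, maps `x ↦ y` where `a<x<y<b`. -/
def pl (a b x y t : ℚ) : ℚ :=
  max t (min (a + (t - a) * ((y - a) / (x - a))) (b + (t - b) * ((b - y) / (b - x))))

variable {a b x y : ℚ} (hax : a < x) (hxy : x < y) (hyb : y < b)

section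
include hax hxy hyb

lemma pl_eq_self_of_le {t : ℚ} (ht : t ≤ a) : pl a b x y t = t := by
  have hxa : (0:ℚ) < x - a := by linarith
  have hm : 1 ≤ (y - a) / (x - a) := (le_div_iff₀ hxa).2 (by linarith)
  have hA : a + (t - a) * ((y - a) / (x - a)) ≤ t := by nlinarith
  exact max_eq_left (le_trans (min_le_left _ _) hA)

lemma pl_eq_self_of_ge {t : ℚ} (ht : b ≤ t) : pl a b x y t = t := by
  have hbx : (0:ℚ) < b - x := by linarith
  have hm : (b - y) / (b - x) ≤ 1 := (div_le_one hbx).2 (by linarith)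
  have hB : b + (t - b) * ((b - y) / (b - x)) ≤ t := by nlinarith
  exact max_eq_left (le_trans (min_le_right _ _) hB)

lemma pl_eq_A {t : ℚ} (h1 : a ≤ t) (h2 : t ≤ x) :
    pl a b x y t = a + (t - a) * ((y - a) / (x - a)) := by
  have hxa : (0:ℚ) < x - a := by linarith
  have hbx : (0:ℚ) < b - x := by linarith
  have hby : (0:ℚ) < b - y := by linarith
  obtain ⟨p, hpdef⟩ : ∃ p, (y - a) / (x - a) = p := ⟨_, rfl⟩
  obtain ⟨q, hqdef⟩ : ∃ q, (b - y) / (b - x) = q := ⟨_, rfl⟩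
  have hp : p * (x - a) = y - a := by rw [← hpdef]; exact div_mul_cancel₀ _ (ne_of_gt hxa)
  have hq : q * (b - x) = b - y := by rw [← hqdef]; exact div_mul_cancel₀ _ (ne_of_gt hbx)
  have hp1 : 1 < p := by rw [← hpdef]; exact (one_lt_div hxa).2 (by linarith)
  have hq1 : q < 1 := by rw [← hqdef]; exact (div_lt_one hbx).2 (by linarith)
  have key : (a + (t - a) * p) - (b + (t - b) * q) = (p - q) * (t - x) := by
    linear_combination hp + hq
  have hAB : a + (t - a) * p ≤ b + (t - b) * q := by nlinarith
  have hAt : t ≤ a + (t - a) * p := by nlinarith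
  unfold pl
  rw [hpdef, hqdef, min_eq_left hAB, max_eq_right hAt]

lemma pl_eq_B {t : ℚ} (h1 : x ≤ t) (h2 : t ≤ b) :
    pl a b x y t = b + (t - b) * ((b - y) / (b - x)) := by
  have hxa : (0:ℚ) < x - a := by linarith
  have hbx : (0:ℚ) < b - x := by linarith
  obtain ⟨p, hpdef⟩ : ∃ p, (y - a) / (x - a) = p := ⟨_, rfl⟩
  obtain ⟨q, hqdef⟩ : ∃ q, (b - y) / (b - x) = q := ⟨_, rfl⟩
  have hp : p * (x - a) = y - a := by rw [← hpdef]; exact div_mul_cancel₀ _ (ne_of_gt hxa)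
  have hq : q * (b - x) = b - y := by rw [← hqdef]; exact div_mul_cancel₀ _ (ne_of_gt hbx)
  have hp1 : 1 < p := by rw [← hpdef]; exact (one_lt_div hxa).2 (by linarith)
  have hq1 : q < 1 := by rw [← hqdef]; exact (div_lt_one hbx).2 (by linarith)
  have hq0 : 0 < q := by rw [← hqdef]; exact div_pos (by linarith) hbx
  have key : (a + (t - a) * p) - (b + (t - b) * q) = (p - q) * (t - x) := by
    linear_combination hp + hq
  have hBA : b + (t - b) * q ≤ a + (t - a) * p := by nlinarith
  have hBt : t ≤ b + (t - b) * q := by nlinarith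
  unfold pl
  rw [hpdef, hqdef, min_eq_right hBA, max_eq_right hBt]

lemma pl_strictMono : StrictMono (pl a b x y) := by
  have hxa : (0:ℚ) < x - a := by linarith
  have hbx : (0:ℚ) < b - x := by linarith
  have hp0 : 0 < (y - a) / (x - a) := div_pos (by linarith) hxa
  have hq0 : 0 < (b - y) / (b - x) := div_pos (by linarith) hbx
  intro s t h
  unfold pl
  refine max_lt_max h (min_lt_min ?_ ?_)
  · have := mul_lt_mul_of_pos_right (sub_lt_sub_right h a) hp0; linarith
  · have := mul_lt_mul_of_pos_right (sub_lt_sub_right h b) hq0; linarith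

lemma pl_surjective : Function.Surjective (pl a b x y) := by
  have hxa : (0:ℚ) < x - a := by linarith
  have hya : (0:ℚ) < y - a := by linarith
  have hbx : (0:ℚ) < b - x := by linarith
  have hby : (0:ℚ) < b - y := by linarith
  intro w
  rcases le_or_gt w a with hw | hw
  · exact ⟨w, pl_eq_self_of_le hax hxy hyb hw⟩
  · rcases le_or_gt w y with hw2 | hw2
    · refine ⟨a + (w - a) * ((x - a) / (y - a)), ?_⟩
      have h1 : a ≤ a + (w - a) * ((x - a) / (y - a)) := by
        have : 0 ≤ (w - a) * ((x - a) / (y - a)) :=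
          mul_nonneg (by linarith) (le_of_lt (div_pos hxa hya))
        linarith
      have h2 : a + (w - a) * ((x - a) / (y - a)) ≤ x := by
        rw [div_eq_mul_inv]
        have hinv : 0 < (y - a)⁻¹ := inv_pos.2 hya
        have hkey : (w - a) * ((x - a) * (y - a)⁻¹) ≤ x - a := by
          rw [show (w - a) * ((x - a) * (y - a)⁻¹) = ((w - a) * (y - a)⁻¹) * (x - a) by ring]
          have : (w - a) * (y - a)⁻¹ ≤ 1 := by
            rw [← div_eq_mul_inv, div_le_one hya]; linarith
          nlinarith
        linarith
      rw [pl_eq_A hax hxy hyb h1 h2]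
      field_simp
      ring
    · rcases le_or_gt w b with hw3 | hw3
      · refine ⟨b + (w - b) * ((b - x) / (b - y)), ?_⟩
        have h2 : b + (w - b) * ((b - x) / (b - y)) ≤ b := by
          have : (w - b) * ((b - x) / (b - y)) ≤ 0 :=
            mul_nonpos_of_nonpos_of_nonneg (by linarith) (le_of_lt (div_pos hbx hby))
          linarith
        have h1 : x ≤ b + (w - b) * ((b - x) / (b - y)) := by
          have hkey : (b - w) * ((b - x) / (b - y)) ≤ b - x := by
            rw [div_eq_mul_inv, show (b - w) * ((b - x) * (b - y)⁻¹) = ((b - w) * (b - y)⁻¹) * (b - x) by ring]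
            have : (b - w) * (b - y)⁻¹ ≤ 1 := by
              rw [← div_eq_mul_inv, div_le_one hby]; linarith
            nlinarith
          nlinarith
        rw [pl_eq_B hax hxy hyb h1 h2]
        field_simp
        ring
      · exact ⟨w, pl_eq_self_of_ge hax hxy hyb (le_of_lt hw3)⟩

/-- the up-mover order automorphism of ℚ -/
noncomputable def mover : ℚ ≃o ℚ :=
  StrictMono.orderIsoOfSurjective _ (pl_strictMono hax hxy hyb) (pl_surjective hax hxy hyb)

lemma mover_apply (t : ℚ) : mover hax hxy hyb t = pl a b x y t := rfl

lemma mover_map : mover hax hxy hyb x = y := by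
  rw [mover_apply, pl_eq_A hax hxy hyb (le_of_lt hax) le_rfl]
  have hxa : x - a ≠ 0 := by intro h; apply absurd hax; simp [sub_eq_zero] at h; simp [h]
  have : (y - a) / (x - a) * (x - a) = y - a := div_mul_cancel₀ _ hxa
  linear_combination this

lemma mover_fix {t : ℚ} (ht : t ≤ a ∨ b ≤ t) : mover hax hxy hyb t = t := by
  rcases ht with h | h
  · rw [mover_apply]; exact pl_eq_self_of_le hax hxy hyb h
  · rw [mover_apply]; exact pl_eq_self_of_ge hax hxy hyb h

end

/-- general mover: maps `x ↦ y`, identity outside `(a,b)`, for any `x y ∈ (a,b)`. -/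
noncomputable def movegen {a b x y : ℚ} (hax : a < x) (hxb : x < b) (hay : a < y)
    (hyb : y < b) : ℚ ≃o ℚ :=
  if h : x < y then mover hax h hyb
  else if h' : y < x then (mover hay h' hxb).symm
  else OrderIso.refl ℚ

lemma movegen_map {a b x y : ℚ} (hax : a < x) (hxb : x < b) (hay : a < y) (hyb : y < b) :
    movegen hax hxb hay hyb x = y := by
  unfold movegen; split_ifs with h h'
  · exact mover_map hax h hyb
  · exact (OrderIso.symm_apply_eq _).2 (mover_map hay h' hxb).symm
  · have hxy : x = y := le_antisymm (not_lt.1 h') (not_lt.1 h)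
    simp [hxy]

lemma movegen_fix {a b x y : ℚ} (hax : a < x) (hxb : x < b) (hay : a < y) (hyb : y < b)
    {t : ℚ} (ht : t ≤ a ∨ b ≤ t) : movegen hax hxb hay hyb t = t := by
  unfold movegen; split_ifs with h h'
  · exact mover_fix hax h hyb ht
  · exact (OrderIso.symm_apply_eq _).2 (mover_fix hay h' hxb ht).symm
  · rfl

section PairMover

variable {u v s s' r r' : ℚ} (h1 : u < s) (h2 : s < s') (h3 : s' < v)
  (h4 : u < r) (h5 : r < r') (h6 : r' < v)

include h1 h2 h3 h4 h5 h6 in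
lemma pm_aux : s' < (max s' r' + v) / 2 ∧ r' < (max s' r' + v) / 2 ∧ (max s' r' + v) / 2 < v := by
  have hm : max s' r' < v := max_lt h3 h6
  have hs : s' ≤ max s' r' := le_max_left _ _
  have hr : r' ≤ max s' r' := le_max_right _ _
  constructor
  · linarith
  constructor
  · linarith
  · linarith

/-- an automorphism of ℚ supported inside `(u,v)` with `s ↦ r` and `s' ↦ r'`. -/
noncomputable def pairMover : ℚ ≃o ℚ :=
  ((mover h2 (pm_aux h1 h2 h3 h4 h5 h6).1 (pm_aux h1 h2 h3 h4 h5 h6).2.2).trans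
    (movegen h1 (lt_trans h2 (pm_aux h1 h2 h3 h4 h5 h6).1) h4
      (lt_trans h5 (pm_aux h1 h2 h3 h4 h5 h6).2.1))).trans
    (movegen (lt_trans h5 (pm_aux h1 h2 h3 h4 h5 h6).2.1) (pm_aux h1 h2 h3 h4 h5 h6).2.2
      h5 h6)

lemma pairMover_apply₁ : pairMover h1 h2 h3 h4 h5 h6 s = r := by
  unfold pairMover
  rw [OrderIso.trans_apply, OrderIso.trans_apply]
  rw [mover_fix _ _ _ (Or.inl le_rfl), movegen_map, movegen_fix _ _ _ _ (Or.inl le_rfl)]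

lemma pairMover_apply₂ : pairMover h1 h2 h3 h4 h5 h6 s' = r' := by
  unfold pairMover
  rw [OrderIso.trans_apply, OrderIso.trans_apply]
  rw [mover_map, movegen_fix _ _ _ _ (Or.inr le_rfl), movegen_map]

lemma pairMover_fix {t : ℚ} (ht : t ≤ u ∨ v ≤ t) : pairMover h1 h2 h3 h4 h5 h6 t = t := by
  have hc : ∀ w : ℚ, t ≤ u ∨ v ≤ t → (t ≤ s ∨ v ≤ t) := by
    rintro w (h | h)
    · exact Or.inl (le_trans h (le_of_lt h1))
    · exact Or.inr h
  unfold pairMover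
  rw [OrderIso.trans_apply, OrderIso.trans_apply]
  rw [mover_fix _ _ _ (hc 0 ht)]
  have ht2 : t ≤ u ∨ (max s' r' + v) / 2 ≤ t := by
    rcases ht with h | h
    · exact Or.inl h
    · exact Or.inr (le_trans (le_of_lt (pm_aux h1 h2 h3 h4 h5 h6).2.2) h)
  rw [movegen_fix _ _ _ _ ht2]
  have ht3 : t ≤ r ∨ v ≤ t := by
    rcases ht with h | h
    · exact Or.inl (le_trans h (le_of_lt h4))
    · exact Or.inr h
  rw [movegen_fix _ _ _ _ ht3]

end PairMover

end NotUniv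


namespace NotUniv
open Cardinal

universe u

lemma exists_between {L : Type u} [LinearOrder L] (κ : Cardinal.{u})
    (hκ : Cardinal.aleph0 < κ)
    (huniv : ∀ (Y : Type u) [LinearOrder Y], #Y < κ → Nonempty (Y ↪o L))
    (hhom : ∀ A B : Set L, #A < κ → #B < κ → ∀ f : A ≃o B,
      ∃ g : L ≃o L, ∀ a : A, g (a : L) = (f a : L))
    {A B : Set L} (hA : A.Countable) (hB : B.Countable)
    (hAB : ∀ a ∈ A, ∀ b ∈ B, a < b) :
    ∃ z : L, (∀ a ∈ A, a < z) ∧ ∀ b ∈ B, z < b := by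
  classical
  -- the abstract order with an added midpoint
  let Y : Type u := ↥A ⊕ₗ (PUnit.{u+1} ⊕ₗ ↥B)
  have hYcard : #Y < κ := by
    have h1 : #Y = #(↥A ⊕ (PUnit.{u+1} ⊕ ↥B)) := rfl
    rw [h1]
    have hAle : #↥A < κ := lt_of_le_of_lt hA.le_aleph0 hκ
    have hBle : #↥B < κ := lt_of_le_of_lt hB.le_aleph0 hκ
    have hP : #(PUnit.{u+1}) < κ := by
      have : #(PUnit.{u+1}) = 1 := Cardinal.mk_punit
      rw [this]; exact lt_trans Cardinal.one_lt_aleph0 hκ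
    have e1 : #(↥A ⊕ (PUnit.{u+1} ⊕ ↥B)) = #↥A + #(PUnit.{u+1} ⊕ ↥B) := by
      rw [Cardinal.mk_sum, Cardinal.lift_id, Cardinal.lift_id]
    have e2 : #(PUnit.{u+1} ⊕ ↥B) = #(PUnit.{u+1}) + #↥B := by
      rw [Cardinal.mk_sum, Cardinal.lift_id, Cardinal.lift_id]
    rw [e1, e2]
    exact Cardinal.add_lt_of_lt (le_of_lt hκ) hAle
      (Cardinal.add_lt_of_lt (le_of_lt hκ) hP hBle)
  obtain ⟨emb⟩ := huniv Y hYcard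
  have hdisj : ∀ x : L, x ∈ B → x ∉ A := by
    intro x hxB hxA
    exact lt_irrefl x (hAB x hxA x hxB)
  -- the map from A ∪ B into Y
  let q : ↥(A ∪ B) → Y := fun x =>
    if h : (x : L) ∈ A then toLex (Sum.inl ⟨(x : L), h⟩)
    else toLex (Sum.inr (toLex (Sum.inr ⟨(x : L), by
      rcases x.2 with h' | h'
      · exact absurd h' h
      · exact h'⟩)))
  have hq : StrictMono q := by
    intro x y hxy
    have hxy' : (x : L) < (y : L) := hxy
    by_cases hx : (x : L) ∈ A
    · by_cases hy : (y : L) ∈ A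
      · simp only [q, dif_pos hx, dif_pos hy]
        exact Sum.Lex.inl_lt_inl_iff.2 hxy'
      · simp only [q, dif_pos hx, dif_neg hy]
        exact Sum.Lex.inl_lt_inr _ _
    · by_cases hy : (y : L) ∈ A
      · -- impossible: x ∈ B, y ∈ A so y < x
        exfalso
        have hxB : (x : L) ∈ B := by
          rcases x.2 with h' | h'
          · exact absurd h' hx
          · exact h'
        exact lt_irrefl _ (lt_trans hxy' (hAB _ hy _ hxB))
      · simp only [q, dif_neg hx, dif_neg hy]
        exact Sum.Lex.inr_lt_inr_iff.2 (Sum.Lex.inr_lt_inr_iff.2 hxy')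
  let F : ↥(A ∪ B) → L := fun x => emb (q x)
  have hF : StrictMono F := fun x y h => emb.lt_iff_lt.2 (hq h)
  have hC1 : #↥(A ∪ B) < κ := lt_of_le_of_lt (hA.union hB).le_aleph0 hκ
  have hC2 : #↥(Set.range F) < κ :=
    lt_of_le_of_lt (le_trans Cardinal.mk_range_le (hA.union hB).le_aleph0) hκ
  obtain ⟨g, hg⟩ := hhom (A ∪ B) (Set.range F) hC1 hC2 (hF.orderIso F)
  have hgF : ∀ x : ↥(A ∪ B), g (x : L) = F x := by
    intro x
    rw [hg x]
    rfl
  let mid : Y := toLex (Sum.inr (toLex (Sum.inl PUnit.unit)))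
  refine ⟨g.symm (emb mid), ?_, ?_⟩
  · intro a ha
    have key : g a < g (g.symm (emb mid)) := by
      rw [OrderIso.apply_symm_apply]
      have : g a = F ⟨a, Or.inl ha⟩ := hgF ⟨a, Or.inl ha⟩
      rw [this]
      apply emb.lt_iff_lt.2
      have hqa : q ⟨a, Or.inl ha⟩ = toLex (Sum.inl ⟨a, ha⟩) := dif_pos ha
      rw [hqa]
      exact Sum.Lex.inl_lt_inr _ _
    exact g.lt_iff_lt.1 key
  · intro b hb
    have key : g (g.symm (emb mid)) < g b := by
      rw [OrderIso.apply_symm_apply]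
      have : g b = F ⟨b, Or.inr hb⟩ := hgF ⟨b, Or.inr hb⟩
      rw [this]
      apply emb.lt_iff_lt.2
      have hqb : q ⟨b, Or.inr hb⟩ =
          toLex (Sum.inr (toLex (Sum.inr ⟨b, hb⟩))) := dif_neg (hdisj b hb)
      rw [hqb]
      exact Sum.Lex.inr_lt_inr_iff.2 (Sum.Lex.inl_lt_inr _ _)
    exact g.lt_iff_lt.1 key

end NotUniv

namespace NotUniv
open Cardinal

universe u

section Main

variable {L : Type u} [LinearOrder L] (κ : Cardinal.{u})

/-- The core combinatorial argument: no nontrivial "continuous-like" action of `Aut ℚ`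
on a saturated linear order. -/
lemma main_contra
    (hκ : Cardinal.aleph0 < κ)
    (huniv : ∀ (Y : Type u) [LinearOrder Y], #Y < κ → Nonempty (Y ↪o L))
    (hhom : ∀ A B : Set L, #A < κ → #B < κ → ∀ f : A ≃o B,
      ∃ g : L ≃o L, ∀ a : A, g (a : L) = (f a : L))
    (ε : (ℚ ≃o ℚ) → (L ≃o L))
    (hmul : ∀ w₁ w₂ : ℚ ≃o ℚ, ∀ z : L, ε (w₁.trans w₂) z = ε w₂ (ε w₁ z))
    (hone : ∀ z : L, ε (OrderIso.refl ℚ) z = z)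
    (hsupp : ∀ z : L, ∃ P : Finset ℚ, ∀ w, (∀ p ∈ P, w p = p) → ε w z = z)
    (hmove : ∃ w y, ε w y ≠ y) : False := by
  classical
  obtain ⟨w₀, y, hy⟩ := hmove
  set St : (ℚ ≃o ℚ) → Prop := fun w => ε w y = y with hStdef
  obtain ⟨P, hP⟩ := hsupp y
  set Good : Finset ℚ → Prop := fun S => ∀ w, (∀ p ∈ S, w p = p) → St w with hGooddef
  have hGoodP : Good P := fun w hw => hP w hw
  have hGoodEmpty : ¬ Good ∅ := by
    intro h
    exact hy (h w₀ (fun p hp => absurd hp (Finset.notMem_empty p)))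
  have hmin : ∀ n (S : Finset ℚ), S.card ≤ n → Good S →
      ∃ (R : Finset ℚ) (c : ℚ), c ∉ R ∧ Good (insert c R) ∧ ¬ Good R := by
    intro n
    induction n with
    | zero =>
      intro S hS hGood
      have : S = ∅ := Finset.card_eq_zero.1 (Nat.le_zero.1 hS)
      rw [this] at hGood
      exact absurd hGood hGoodEmpty
    | succ n ih =>
      intro S hcard hGood
      rcases Finset.eq_empty_or_nonempty S with rfl | ⟨c, hc⟩
      · exact absurd hGood hGoodEmpty
      rcases Classical.em (Good (S.erase c)) with hR | hR
      · refine ih (S.erase c) ?_ hR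
        have := Finset.card_erase_of_mem hc
        omega
      · exact ⟨S.erase c, c, Finset.notMem_erase c S,
          by rwa [Finset.insert_erase hc], hR⟩
  obtain ⟨R, c, hcR, hGoodRc, hnGoodR⟩ := hmin P.card P le_rfl hGoodP
  obtain ⟨w₁, hw₁R, hw₁⟩ : ∃ w, (∀ p ∈ R, w p = p) ∧ ¬ St w := by
    by_contra h
    push_neg at h
    exact hnGoodR (fun w hw => h w hw)
  set s₀ : ℚ := w₁ c with hs₀def
  have hs₀c : s₀ ≠ c := by
    intro h
    apply hw₁
    apply hGoodRc w₁
    intro p hp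
    rcases Finset.mem_insert.1 hp with rfl | hp
    · exact h
    · exact hw₁R p hp
  have hgap : ∀ p ∈ R, (p < c ↔ p < s₀) ∧ (c < p ↔ s₀ < p) := by
    intro p hp
    have hpfix : w₁ p = p := hw₁R p hp
    constructor
    · constructor
      · intro h
        have := w₁.strictMono h
        rwa [hpfix] at this
      · intro h
        have : w₁ p < w₁ c := by rwa [hpfix]
        exact w₁.lt_iff_lt.1 this
    · constructor
      · intro h
        have := w₁.strictMono h
        rwa [hpfix] at this
      · intro h
        have : w₁ c < w₁ p := by rwa [hpfix]
        exact w₁.lt_iff_lt.1 this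
  -- split of R around the pair {c, s₀}
  have hRsplit : ∀ p ∈ R, (p < c ∧ p < s₀) ∨ (c < p ∧ s₀ < p) := by
    intro p hp
    rcases lt_trichotomy p c with h | h | h
    · exact Or.inl ⟨h, ((hgap p hp).1).1 h⟩
    · exact absurd (h ▸ hp) hcR
    · exact Or.inr ⟨h, ((hgap p hp).2).1 h⟩
  -- choose u below min c s₀ with nothing of R in between
  obtain ⟨u, hu_c, hu_s₀, hu_R⟩ :
      ∃ u : ℚ, u < c ∧ u < s₀ ∧ ∀ p ∈ R, p < c ∧ p < s₀ → p < u := by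
    set m := min c s₀ with hm
    set T := R.filter (fun p => p < m) with hT
    by_cases hTne : T.Nonempty
    · refine ⟨(T.max' hTne + m) / 2, ?_, ?_, ?_⟩
      · have := T.max'_mem hTne
        have hlt : T.max' hTne < m := (Finset.mem_filter.1 this).2
        have : (T.max' hTne + m) / 2 < m := by linarith
        exact lt_of_lt_of_le this (min_le_left _ _)
      · have := T.max'_mem hTne
        have hlt : T.max' hTne < m := (Finset.mem_filter.1 this).2
        have : (T.max' hTne + m) / 2 < m := by linarith
        exact lt_of_lt_of_le this (min_le_right _ _)
      · intro p hp hpm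
        have hpT : p ∈ T := Finset.mem_filter.2 ⟨hp, lt_min hpm.1 hpm.2⟩
        have h1 : p ≤ T.max' hTne := Finset.le_max' T p hpT
        have h2 : T.max' hTne < m := (Finset.mem_filter.1 (T.max'_mem hTne)).2
        linarith
    · refine ⟨m - 1, ?_, ?_, ?_⟩
      · have : m - 1 < m := by linarith
        exact lt_of_lt_of_le this (min_le_left _ _)
      · have : m - 1 < m := by linarith
        exact lt_of_lt_of_le this (min_le_right _ _)
      · intro p hp hpm
        exact absurd ⟨p, Finset.mem_filter.2 ⟨hp, lt_min hpm.1 hpm.2⟩⟩ hTne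
  obtain ⟨v, hc_v, hs₀_v, hv_R⟩ :
      ∃ v : ℚ, c < v ∧ s₀ < v ∧ ∀ p ∈ R, c < p ∧ s₀ < p → v < p := by
    set m := max c s₀ with hm
    set T := R.filter (fun p => m < p) with hT
    by_cases hTne : T.Nonempty
    · refine ⟨(m + T.min' hTne) / 2, ?_, ?_, ?_⟩
      · have := T.min'_mem hTne
        have hlt : m < T.min' hTne := (Finset.mem_filter.1 this).2
        have : m < (m + T.min' hTne) / 2 := by linarith
        exact lt_of_le_of_lt (le_max_left _ _) this
      · have := T.min'_mem hTne
        have hlt : m < T.min' hTne := (Finset.mem_filter.1 this).2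
        have : m < (m + T.min' hTne) / 2 := by linarith
        exact lt_of_le_of_lt (le_max_right _ _) this
      · intro p hp hpm
        have hpT : p ∈ T := Finset.mem_filter.2 ⟨hp, max_lt hpm.1 hpm.2⟩
        have h1 : T.min' hTne ≤ p := Finset.min'_le T p hpT
        have h2 : m < T.min' hTne := (Finset.mem_filter.1 (T.min'_mem hTne)).2
        linarith
    · refine ⟨m + 1, ?_, ?_, ?_⟩
      · have : m < m + 1 := by linarith
        exact lt_of_le_of_lt (le_max_left _ _) this
      · have : m < m + 1 := by linarith
        exact lt_of_le_of_lt (le_max_right _ _) this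
      · intro p hp hpm
        exact absurd ⟨p, Finset.mem_filter.2 ⟨hp, max_lt hpm.1 hpm.2⟩⟩ hTne
  have hRout : ∀ p ∈ R, p < u ∨ v < p := by
    intro p hp
    rcases hRsplit p hp with h | h
    · exact Or.inl (hu_R p hp h)
    · exact Or.inr (hv_R p hp h)
  have huv : u < v := lt_trans hu_c hc_v
  -- the one-parameter family φ
  set φ : ℚ → L := fun s =>
    if h : u < s ∧ s < v then ε (movegen hu_c hc_v h.1 h.2) y else y with hφdef
  have hφ : ∀ (s : ℚ) (h1 : u < s) (h2 : s < v),
      φ s = ε (movegen hu_c hc_v h1 h2) y := by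
    intro s h1 h2
    simp only [hφdef, dif_pos (And.intro h1 h2)]
  -- W1 : value of the action on y depends only on the image of c
  have W1 : ∀ w : ℚ ≃o ℚ, (∀ p ∈ R, w p = p) → ∀ (hc1 : u < w c) (hc2 : w c < v),
      φ (w c) = ε w y := by
    intro w hwR hc1 hc2
    set ws := movegen hu_c hc_v hc1 hc2 with hwsdef
    have hws_c : ws c = w c := movegen_map _ _ _ _
    have hws_R : ∀ p ∈ R, ws p = p := by
      intro p hp
      apply movegen_fix
      rcases hRout p hp with h | h
      · exact Or.inl (le_of_lt h)
      · exact Or.inr (le_of_lt h)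
    have hv'c : (w.trans ws.symm) c = c := by
      have : ws.symm (w c) = c := by
        rw [← hws_c]
        exact ws.symm_apply_apply c
      simpa [OrderIso.trans_apply] using this
    have hv'R : ∀ p ∈ insert c R, (w.trans ws.symm) p = p := by
      intro p hp
      rcases Finset.mem_insert.1 hp with rfl | hp
      · exact hv'c
      · have h1 : w p = p := hwR p hp
        have h2 : ws.symm p = p := by
          have hfix := hws_R p hp
          conv_lhs => rw [← hfix]
          exact ws.symm_apply_apply p
        simp [OrderIso.trans_apply, h1, h2]
    have hSt : St (w.trans ws.symm) := hGoodRc _ hv'R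
    have hcomp : (w.trans ws.symm).trans ws = w := by
      ext t
      simp [OrderIso.trans_apply]
    have : ε w y = ε ws (ε (w.trans ws.symm) y) := by
      rw [← hmul, hcomp]
    rw [this, hSt]
    exact (hφ (w c) hc1 hc2).symm ▸ rfl
  -- W2 : equivariance
  have W2 : ∀ w : ℚ ≃o ℚ, (∀ p ∈ R, w p = p) → ∀ (s : ℚ) (hs1 : u < s) (hs2 : s < v)
      (h1 : u < w s) (h2 : w s < v), φ (w s) = ε w (φ s) := by
    intro w hwR s hs1 hs2 h1 h2
    set ws := movegen hu_c hc_v hs1 hs2 with hwsdef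
    have hws_c : ws c = s := movegen_map _ _ _ _
    have hws_R : ∀ p ∈ R, ws p = p := by
      intro p hp
      apply movegen_fix
      rcases hRout p hp with h | h
      · exact Or.inl (le_of_lt h)
      · exact Or.inr (le_of_lt h)
    have hcomb : ∀ p ∈ R, (ws.trans w) p = p := by
      intro p hp
      simp [OrderIso.trans_apply, hws_R p hp, hwR p hp]
    have hc1' : u < (ws.trans w) c := by
      rw [OrderIso.trans_apply, hws_c]; exact h1
    have hc2' : (ws.trans w) c < v := by
      rw [OrderIso.trans_apply, hws_c]; exact h2
    have := W1 (ws.trans w) hcomb hc1' hc2'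
    rw [OrderIso.trans_apply, hws_c] at this
    rw [this, hmul, ← hφ s hs1 hs2]
  -- φ c = y and φ s₀ ≠ y
  have hφc : φ c = y := by
    rw [hφ c hu_c hc_v]
    have : movegen hu_c hc_v hu_c hc_v = OrderIso.refl ℚ := by
      unfold movegen
      rw [dif_neg (lt_irrefl c), dif_neg (lt_irrefl c)]
    rw [this, hone]
  have hs₀uv1 : u < s₀ := hu_s₀
  have hs₀uv2 : s₀ < v := hs₀_v
  have hφs₀ : φ s₀ ≠ y := by
    intro hcon
    apply hw₁
    have h := W1 w₁ hw₁R (show u < w₁ c from hu_s₀) (show w₁ c < v from hs₀_v)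
    show ε w₁ y = y
    rw [← h]
    exact hcon
  -- the comparison transfer
  have W4lt : ∀ s s' r r' : ℚ, u < s → s < s' → s' < v → u < r → r < r' → r' < v →
      (φ s < φ s' ↔ φ r < φ r') := by
    intro s s' r r' h1 h2 h3 h4 h5 h6
    set g := pairMover h1 h2 h3 h4 h5 h6 with hgdef
    have hgR : ∀ p ∈ R, g p = p := by
      intro p hp
      apply pairMover_fix
      rcases hRout p hp with h | h
      · exact Or.inl (le_of_lt h)
      · exact Or.inr (le_of_lt h)
    have e1 : φ r = ε g (φ s) := by
      have := W2 g hgR s h1 (lt_trans h2 h3) (by rw [hgdef, pairMover_apply₁]; exact h4)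
        (by rw [hgdef, pairMover_apply₁]; exact lt_trans h5 h6)
      rw [hgdef, pairMover_apply₁] at this
      rw [this, hgdef]
    have e2 : φ r' = ε g (φ s') := by
      have := W2 g hgR s' (lt_trans h1 h2) h3 (by rw [hgdef, pairMover_apply₂]; exact lt_trans h4 h5)
        (by rw [hgdef, pairMover_apply₂]; exact h6)
      rw [hgdef, pairMover_apply₂] at this
      rw [this, hgdef]
    rw [e1, e2]
    exact (ε g).lt_iff_lt.symm
  have W4eq : ∀ s s' r r' : ℚ, u < s → s < s' → s' < v → u < r → r < r' → r' < v →
      (φ s = φ s' ↔ φ r = φ r') := by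
    intro s s' r r' h1 h2 h3 h4 h5 h6
    set g := pairMover h1 h2 h3 h4 h5 h6 with hgdef
    have hgR : ∀ p ∈ R, g p = p := by
      intro p hp
      apply pairMover_fix
      rcases hRout p hp with h | h
      · exact Or.inl (le_of_lt h)
      · exact Or.inr (le_of_lt h)
    have e1 : φ r = ε g (φ s) := by
      have := W2 g hgR s h1 (lt_trans h2 h3) (by rw [hgdef, pairMover_apply₁]; exact h4)
        (by rw [hgdef, pairMover_apply₁]; exact lt_trans h5 h6)
      rw [hgdef, pairMover_apply₁] at this
      rw [this, hgdef]
    have e2 : φ r' = ε g (φ s') := by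
      have := W2 g hgR s' (lt_trans h1 h2) h3 (by rw [hgdef, pairMover_apply₂]; exact lt_trans h4 h5)
        (by rw [hgdef, pairMover_apply₂]; exact h6)
      rw [hgdef, pairMover_apply₂] at this
      rw [this, hgdef]
    rw [e1, e2]
    constructor
    · intro h; exact congrArg _ h
    · intro h; exact (ε g).injective h
  -- monotone dichotomy
  have hpair : ∃ p1 p2 : ℚ, u < p1 ∧ p1 < p2 ∧ p2 < v ∧ φ p1 ≠ φ p2 := by
    rcases lt_or_gt_of_ne hs₀c with h | h
    · exact ⟨s₀, c, hu_s₀, h, hc_v, by rw [hφc]; exact hφs₀⟩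
    · exact ⟨c, s₀, hu_c, h, hs₀_v, by rw [hφc]; exact fun hh => hφs₀ hh.symm⟩
  obtain ⟨p1, p2, hp1, hp12, hp2, hpne⟩ := hpair
  have hdichot : (∀ s s' : ℚ, u < s → s < s' → s' < v → φ s < φ s') ∨
      (∀ s s' : ℚ, u < s → s < s' → s' < v → φ s' < φ s) := by
    rcases lt_trichotomy (φ p1) (φ p2) with h | h | h
    · left
      intro s s' h1 h2 h3
      exact (W4lt p1 p2 s s' hp1 hp12 hp2 h1 h2 h3).1 h
    · exact absurd h hpne
    · right
      intro s s' h1 h2 h3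
      rcases lt_trichotomy (φ s') (φ s) with hh | hh | hh
      · exact hh
      · exact absurd ((W4eq s s' p1 p2 h1 h2 h3 hp1 hp12 hp2).1 hh.symm) hpne
      · exact absurd ((W4lt s s' p1 p2 h1 h2 h3 hp1 hp12 hp2).1 hh)
          (fun hc => lt_asymm h hc)
  -- the irrational cut
  set γ : ℝ := (u : ℝ) + ((v - u) / 2 : ℚ) * Real.sqrt 2 with hγdef
  have hvu : (0:ℚ) < v - u := by linarith
  have hγirr : Irrational γ := by
    apply Irrational.ratCast_add
    exact Irrational.ratCast_mul irrational_sqrt_two (by positivity)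
  have hsqrt2pos : (0:ℝ) < Real.sqrt 2 := Real.sqrt_pos.2 (by norm_num)
  have hsqrt2lt : Real.sqrt 2 < 2 := by
    nlinarith [Real.sq_sqrt (by norm_num : (0:ℝ) ≤ 2), Real.sqrt_nonneg 2]
  have hγu : (u : ℝ) < γ := by
    rw [hγdef]
    have h1 : (0:ℝ) < ((v - u)/2 : ℚ) := by exact_mod_cast half_pos hvu
    nlinarith
  have hγv : γ < (v : ℝ) := by
    rw [hγdef]
    have h1 : (0:ℝ) < ((v - u)/2 : ℚ) := by exact_mod_cast half_pos hvu
    have h2 : (((v - u)/2 : ℚ) : ℝ) = ((v:ℝ) - (u:ℝ))/2 := by push_cast; ring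
    nlinarith
  -- the two halves
  set Slo : Set ℚ := {s : ℚ | (u < s ∧ s < v) ∧ (s : ℝ) < γ} with hSlo
  set Shi : Set ℚ := {s : ℚ | (u < s ∧ s < v) ∧ γ < (s : ℝ)} with hShi
  have hSloCnt : (φ '' Slo).Countable := (Set.to_countable Slo).image φ
  have hShiCnt : (φ '' Shi).Countable := (Set.to_countable Shi).image φ
  -- final contradiction, casewise on the dichotomy
  rcases hdichot with hinc | hdec
  · have hAB : ∀ a ∈ φ '' Slo, ∀ b ∈ φ '' Shi, a < b := by
      rintro a ⟨s, hs, rfl⟩ b ⟨r, hr, rfl⟩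
      have hsr : s < r := by
        have : (s:ℝ) < (r:ℝ) := lt_trans hs.2 hr.2
        exact_mod_cast this
      exact hinc s r hs.1.1 hsr hr.1.2
    obtain ⟨z, hzA, hzB⟩ := exists_between κ hκ huniv hhom hSloCnt hShiCnt hAB
    obtain ⟨Pz, hPz⟩ := hsupp z
    -- rationals d₁ < γ < d₂ with (d₁,d₂) avoiding Pz, inside [u,v]
    obtain ⟨d₁, d₂, hd₁γ, hγd₂, hud₁, hd₂v, hPzout⟩ :
        ∃ d₁ d₂ : ℚ, (d₁:ℝ) < γ ∧ γ < (d₂:ℝ) ∧ u < d₁ ∧ d₂ < v ∧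
          ∀ p ∈ Pz, p ≤ d₁ ∨ d₂ ≤ p := by
      set Tlo : Finset ℚ := insert u (Pz.filter (fun p => (p:ℝ) < γ)) with hTlo
      set Thi : Finset ℚ := insert v (Pz.filter (fun p => γ < (p:ℝ))) with hThi
      have hTloNe : Tlo.Nonempty := ⟨u, Finset.mem_insert_self _ _⟩
      have hThiNe : Thi.Nonempty := ⟨v, Finset.mem_insert_self _ _⟩
      set α := Tlo.max' hTloNe with hα
      set β := Thi.min' hThiNe with hβ
      have hαγ : (α:ℝ) < γ := by
        have := Tlo.max'_mem hTloNe
        rcases Finset.mem_insert.1 this with h | h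
        · rw [hα] at *; rw [h]; exact hγu
        · exact (Finset.mem_filter.1 h).2
      have hγβ : γ < (β:ℝ) := by
        have := Thi.min'_mem hThiNe
        rcases Finset.mem_insert.1 this with h | h
        · rw [hβ] at *; rw [h]; exact hγv
        · exact (Finset.mem_filter.1 h).2
      obtain ⟨d₁, hd₁1, hd₁2⟩ := exists_rat_btwn hαγ
      obtain ⟨d₂, hd₂1, hd₂2⟩ := exists_rat_btwn hγβ
      refine ⟨d₁, d₂, hd₁2, hd₂1, ?_, ?_, ?_⟩
      · have h1 : u ≤ α := Finset.le_max' _ _ (Finset.mem_insert_self _ _)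
        have h2 : α < d₁ := by exact_mod_cast hd₁1
        linarith
      · have h1 : β ≤ v := Finset.min'_le _ _ (Finset.mem_insert_self _ _)
        have h2 : d₂ < β := by exact_mod_cast hd₂2
        linarith
      · intro p hp
        rcases lt_trichotomy ((p:ℝ)) γ with h | h | h
        · left
          have hpT : p ∈ Tlo := Finset.mem_insert_of_mem (Finset.mem_filter.2 ⟨hp, h⟩)
          have h1 : p ≤ α := Finset.le_max' _ _ hpT
          have h2 : α < d₁ := by exact_mod_cast hd₁1
          linarith
        · exact absurd h.symm (hγirr.ne_rat p)
        · right
          have hpT : p ∈ Thi := Finset.mem_insert_of_mem (Finset.mem_filter.2 ⟨hp, h⟩)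
          have h1 : β ≤ p := Finset.min'_le _ _ hpT
          have h2 : d₂ < β := by exact_mod_cast hd₂2
          linarith
    obtain ⟨sst, hsst1, hsst2⟩ := exists_rat_btwn hd₁γ
    obtain ⟨rst, hrst1, hrst2⟩ := exists_rat_btwn hγd₂
    have hd₁s : d₁ < sst := by exact_mod_cast hsst1
    have hsr : sst < rst := by
      have : (sst:ℝ) < (rst:ℝ) := lt_trans hsst2 hrst1
      exact_mod_cast this
    have hrd₂ : rst < d₂ := by exact_mod_cast hrst2
    set g := mover hd₁s hsr hrd₂ with hgdef
    have hgz : ε g z = z := by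
      apply hPz
      intro p hp
      apply mover_fix
      rcases hPzout p hp with h | h
      · exact Or.inl h
      · exact Or.inr h
    have hgR : ∀ p ∈ R, g p = p := by
      intro p hp
      apply mover_fix
      rcases hRout p hp with h | h
      · exact Or.inl (le_trans (le_of_lt h) (le_of_lt hud₁))
      · exact Or.inr (le_trans (le_of_lt hd₂v) (le_of_lt h))
    have hsuv1 : u < sst := lt_trans hud₁ hd₁s
    have hsuv2 : sst < v := lt_trans (lt_trans hsr hrd₂) hd₂v
    have hruv1 : u < rst := lt_trans hsuv1 hsr
    have hruv2 : rst < v := lt_trans hrd₂ hd₂v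
    have hkey : φ rst = ε g (φ sst) := by
      have := W2 g hgR sst hsuv1 hsuv2
        (by rw [hgdef, mover_map]; exact hruv1) (by rw [hgdef, mover_map]; exact hruv2)
      rw [hgdef, mover_map] at this
      rw [this, hgdef]
    have hφsst : φ sst < z := hzA _ ⟨sst, ⟨⟨hsuv1, hsuv2⟩, hsst2⟩, rfl⟩
    have hφrst : z < φ rst := hzB _ ⟨rst, ⟨⟨hruv1, hruv2⟩, hrst1⟩, rfl⟩
    have : φ rst < z := by
      rw [hkey]
      calc ε g (φ sst) < ε g z := (ε g).strictMono hφsst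
        _ = z := hgz
    exact lt_asymm this hφrst
  · -- decreasing case: mirror image
    have hAB : ∀ a ∈ φ '' Shi, ∀ b ∈ φ '' Slo, a < b := by
      rintro a ⟨r, hr, rfl⟩ b ⟨s, hs, rfl⟩
      have hsr : s < r := by
        have : (s:ℝ) < (r:ℝ) := lt_trans hs.2 hr.2
        exact_mod_cast this
      exact hdec s r hs.1.1 hsr hr.1.2
    obtain ⟨z, hzA, hzB⟩ := exists_between κ hκ huniv hhom hShiCnt hSloCnt hAB
    obtain ⟨Pz, hPz⟩ := hsupp z
    obtain ⟨d₁, d₂, hd₁γ, hγd₂, hud₁, hd₂v, hPzout⟩ :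
        ∃ d₁ d₂ : ℚ, (d₁:ℝ) < γ ∧ γ < (d₂:ℝ) ∧ u < d₁ ∧ d₂ < v ∧
          ∀ p ∈ Pz, p ≤ d₁ ∨ d₂ ≤ p := by
      set Tlo : Finset ℚ := insert u (Pz.filter (fun p => (p:ℝ) < γ)) with hTlo
      set Thi : Finset ℚ := insert v (Pz.filter (fun p => γ < (p:ℝ))) with hThi
      have hTloNe : Tlo.Nonempty := ⟨u, Finset.mem_insert_self _ _⟩
      have hThiNe : Thi.Nonempty := ⟨v, Finset.mem_insert_self _ _⟩
      set α := Tlo.max' hTloNe with hα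
      set β := Thi.min' hThiNe with hβ
      have hαγ : (α:ℝ) < γ := by
        have := Tlo.max'_mem hTloNe
        rcases Finset.mem_insert.1 this with h | h
        · rw [hα] at *; rw [h]; exact hγu
        · exact (Finset.mem_filter.1 h).2
      have hγβ : γ < (β:ℝ) := by
        have := Thi.min'_mem hThiNe
        rcases Finset.mem_insert.1 this with h | h
        · rw [hβ] at *; rw [h]; exact hγv
        · exact (Finset.mem_filter.1 h).2
      obtain ⟨d₁, hd₁1, hd₁2⟩ := exists_rat_btwn hαγ
      obtain ⟨d₂, hd₂1, hd₂2⟩ := exists_rat_btwn hγβ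
      refine ⟨d₁, d₂, hd₁2, hd₂1, ?_, ?_, ?_⟩
      · have h1 : u ≤ α := Finset.le_max' _ _ (Finset.mem_insert_self _ _)
        have h2 : α < d₁ := by exact_mod_cast hd₁1
        linarith
      · have h1 : β ≤ v := Finset.min'_le _ _ (Finset.mem_insert_self _ _)
        have h2 : d₂ < β := by exact_mod_cast hd₂2
        linarith
      · intro p hp
        rcases lt_trichotomy ((p:ℝ)) γ with h | h | h
        · left
          have hpT : p ∈ Tlo := Finset.mem_insert_of_mem (Finset.mem_filter.2 ⟨hp, h⟩)
          have h1 : p ≤ α := Finset.le_max' _ _ hpT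
          have h2 : α < d₁ := by exact_mod_cast hd₁1
          linarith
        · exact absurd h.symm (hγirr.ne_rat p)
        · right
          have hpT : p ∈ Thi := Finset.mem_insert_of_mem (Finset.mem_filter.2 ⟨hp, h⟩)
          have h1 : β ≤ p := Finset.min'_le _ _ hpT
          have h2 : d₂ < β := by exact_mod_cast hd₂2
          linarith
    obtain ⟨sst, hsst1, hsst2⟩ := exists_rat_btwn hd₁γ
    obtain ⟨rst, hrst1, hrst2⟩ := exists_rat_btwn hγd₂
    have hd₁s : d₁ < sst := by exact_mod_cast hsst1
    have hsr : sst < rst := by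
      have : (sst:ℝ) < (rst:ℝ) := lt_trans hsst2 hrst1
      exact_mod_cast this
    have hrd₂ : rst < d₂ := by exact_mod_cast hrst2
    set g := mover hd₁s hsr hrd₂ with hgdef
    have hgz : ε g z = z := by
      apply hPz
      intro p hp
      apply mover_fix
      rcases hPzout p hp with h | h
      · exact Or.inl h
      · exact Or.inr h
    have hgR : ∀ p ∈ R, g p = p := by
      intro p hp
      apply mover_fix
      rcases hRout p hp with h | h
      · exact Or.inl (le_trans (le_of_lt h) (le_of_lt hud₁))
      · exact Or.inr (le_trans (le_of_lt hd₂v) (le_of_lt h))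
    have hsuv1 : u < sst := lt_trans hud₁ hd₁s
    have hsuv2 : sst < v := lt_trans (lt_trans hsr hrd₂) hd₂v
    have hruv1 : u < rst := lt_trans hsuv1 hsr
    have hruv2 : rst < v := lt_trans hrd₂ hd₂v
    have hkey : φ rst = ε g (φ sst) := by
      have := W2 g hgR sst hsuv1 hsuv2
        (by rw [hgdef, mover_map]; exact hruv1) (by rw [hgdef, mover_map]; exact hruv2)
      rw [hgdef, mover_map] at this
      rw [this, hgdef]
    have hφsst : z < φ sst := hzB _ ⟨sst, ⟨⟨hsuv1, hsuv2⟩, hsst2⟩, rfl⟩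
    have hφrst : φ rst < z := hzA _ ⟨rst, ⟨⟨hruv1, hruv2⟩, hrst1⟩, rfl⟩
    have : z < φ rst := by
      rw [hkey]
      calc z = ε g z := hgz.symm
        _ < ε g (φ sst) := (ε g).strictMono hφsst
    exact lt_asymm this hφrst

end Main

end NotUniv
namespace NotUniv

/-- Build an order automorphism from a permutation that preserves `<` both ways. -/
def isoOfPerm {α : Type*} [LinearOrder α] (f : Equiv.Perm α)
    (hf : ∀ x y, f x < f y ↔ x < y) : α ≃o α where
  toEquiv := f
  map_rel_iff' := by
    intro a b
    exact le_iff_le_iff_lt_iff_lt.2 (hf b a)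

lemma mem_relAut_iff {V : Type*} {r : V → V → Prop} {g : Equiv.Perm V} :
    g ∈ relAut r ↔ ∀ x y, r (g x) (g y) ↔ r x y := Iff.rfl

/-- `ULift ℚ ≃o ℚ`. -/
def uliftRatIso : ULift.{u} ℚ ≃o ℚ where
  toEquiv := Equiv.ulift
  map_rel_iff' := Iff.rfl

end NotUniv

open Cardinal in
/-- Let `κ` be an uncountable cardinal with `κ^{<κ} = κ` and let `L` be a linear order of
cardinality `κ` which is `κ`-universal and `κ`-ultrahomogeneous. Then `Aut(L)` is not
universal: there is a subset `Q ⊆ L` whose induced linear order is order-isomorphic to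
`(ℚ, <)` and such that there is no injective continuous group homomorphism from the group
of order automorphisms of `Q` into `Aut(L)` (both with the pointwise convergence
topology). -/
theorem randomLinearOrderAut_not_universal
    {L : Type u} [LinearOrder L] (κ : Cardinal.{u})
    (hκ : Cardinal.aleph0 < κ) (hpow : κ ^< κ = κ)
    (hcard : #L = κ)
    (huniv : ∀ (Y : Type u) [LinearOrder Y], #Y < κ → Nonempty (Y ↪o L))
    (hhom : ∀ A B : Set L, #A < κ → #B < κ → ∀ f : A ≃o B,
      ∃ g : L ≃o L, ∀ a : A, g (a : L) = (f a : L)) :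
    ∃ Q : Set L, Nonempty (Q ≃o ℚ) ∧
      ¬ ∃ e : relAut (fun a b : Q => (a : L) < b) →* relAut (fun a b : L => a < b),
          Function.Injective e ∧ Continuous e := by
  classical
  -- pick a copy of ℚ inside L
  have hQcard : #(ULift.{u} ℚ) < κ := by
    have h1 : #(ULift.{u} ℚ) = Cardinal.lift.{u} #ℚ := Cardinal.mk_uLift ℚ
    have h2 : #ℚ = Cardinal.aleph0 := Cardinal.mkRat
    rw [h1, h2, Cardinal.lift_aleph0]
    exact hκ
  obtain ⟨emb⟩ := huniv (ULift.{u} ℚ) hQcard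
  set Q : Set L := Set.range ⇑emb with hQdef
  have embSM : StrictMono ⇑emb := emb.strictMono
  let ι : ↥Q ≃o ℚ := (embSM.orderIso ⇑emb).symm.trans NotUniv.uliftRatIso
  refine ⟨Q, ⟨ι⟩, ?_⟩
  rintro ⟨e, einj, econt⟩
  -- transport of automorphisms of ℚ to permutations of Q
  let Tperm : (ℚ ≃o ℚ) → Equiv.Perm ↥Q := fun w =>
    (ι.toEquiv.trans w.toEquiv).trans ι.symm.toEquiv
  have hTapp : ∀ w x, Tperm w x = ι.symm (w (ι x)) := fun w x => rfl
  have hTmem : ∀ w, Tperm w ∈ relAut (fun a b : Q => (a : L) < b) := by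
    intro w
    rw [NotUniv.mem_relAut_iff]
    intro x y
    show ((ι.symm (w (ι x)) : ↥Q) : L) < (ι.symm (w (ι y)) : ↥Q) ↔ _
    rw [Subtype.coe_lt_coe, OrderIso.lt_iff_lt, OrderIso.lt_iff_lt, OrderIso.lt_iff_lt,
      ← Subtype.coe_lt_coe]
  let E : (ℚ ≃o ℚ) → ↥(relAut (fun a b : L => a < b)) := fun w => e ⟨Tperm w, hTmem w⟩
  have hEorder : ∀ w (x y : L),
      ((E w : Equiv.Perm L)) x < ((E w : Equiv.Perm L)) y ↔ x < y := by
    intro w x y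
    exact (NotUniv.mem_relAut_iff.1 (E w).2) x y
  let ε : (ℚ ≃o ℚ) → (L ≃o L) := fun w => NotUniv.isoOfPerm (E w : Equiv.Perm L) (hEorder w)
  have hεapp : ∀ w (z : L), ε w z = (E w : Equiv.Perm L) z := fun w z => rfl
  -- multiplicativity
  have hmul : ∀ w₁ w₂ : ℚ ≃o ℚ, ∀ z : L, ε (w₁.trans w₂) z = ε w₂ (ε w₁ z) := by
    intro w₁ w₂ z
    have hT : (⟨Tperm (w₁.trans w₂), hTmem _⟩ : ↥(relAut (fun a b : Q => (a : L) < b))) =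
        ⟨Tperm w₂, hTmem w₂⟩ * ⟨Tperm w₁, hTmem w₁⟩ := by
      apply Subtype.ext
      apply Equiv.ext
      intro x
      rw [MulMemClass.coe_mul, Equiv.Perm.mul_apply]
      rw [hTapp, hTapp, hTapp]
      simp [OrderIso.trans_apply]
    have : E (w₁.trans w₂) = E w₂ * E w₁ := by
      show e _ = e _ * e _
      rw [← map_mul, ← hT]
    rw [hεapp, hεapp, hεapp, this]
    rfl
  have hone : ∀ z : L, ε (OrderIso.refl ℚ) z = z := by
    intro z
    have hT : (⟨Tperm (OrderIso.refl ℚ), hTmem _⟩ :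
        ↥(relAut (fun a b : Q => (a : L) < b))) = 1 := by
      apply Subtype.ext
      apply Equiv.ext
      intro x
      show ι.symm ((OrderIso.refl ℚ) (ι x)) = x
      simp
    have : E (OrderIso.refl ℚ) = 1 := by
      show e _ = 1
      rw [hT, map_one]
    rw [hεapp, this]
    rfl
  -- nontriviality
  have hmove : ∃ (w : ℚ ≃o ℚ) (y : L), ε w y ≠ y := by
    set w₀ : ℚ ≃o ℚ := OrderIso.addRight (1 : ℚ) with hw₀
    by_contra h
    push_neg at h
    have hE1 : E w₀ = 1 := by
      apply Subtype.ext
      apply Equiv.ext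
      intro z
      exact h w₀ z
    have : (⟨Tperm w₀, hTmem w₀⟩ : ↥(relAut (fun a b : Q => (a : L) < b))) = 1 := by
      apply einj
      rw [map_one]
      exact hE1
    have hT1 : Tperm w₀ = 1 := congrArg Subtype.val this
    have := Equiv.ext_iff.1 hT1 (ι.symm 0)
    rw [hTapp] at this
    simp only [OrderIso.apply_symm_apply, Equiv.Perm.coe_one, id_eq] at this
    have h01 : w₀ (0 : ℚ) = (0 : ℚ) := ι.symm.injective this
    rw [hw₀] at h01
    simp [OrderIso.addRight] at h01
    change (0:ℚ) + 1 = 0 at h01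
    norm_num at h01
  -- continuity: finite supports
  have hsupp : ∀ z : L, ∃ P : Finset ℚ, ∀ w, (∀ p ∈ P, w p = p) → ε w z = z := by
    intro z
    letI : TopologicalSpace L := ⊥
    haveI : DiscreteTopology L := ⟨rfl⟩
    letI : TopologicalSpace ↥Q := ⊥
    have hV : IsOpen {h : ↥(relAut (fun a b : L => a < b)) |
        ((h : Equiv.Perm L) : L → L) z = z} := by
      have h1 : Continuous (fun h : ↥(relAut (fun a b : L => a < b)) =>
          ((h : Equiv.Perm L) : L → L)) :=
        continuous_induced_dom.comp continuous_subtype_val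
      have h2 : Continuous (fun h : ↥(relAut (fun a b : L => a < b)) =>
          ((h : Equiv.Perm L) : L → L) z) := (continuous_apply z).comp h1
      exact (isOpen_discrete ({z} : Set L)).preimage h2
    have hU : IsOpen (⇑e ⁻¹' {h : ↥(relAut (fun a b : L => a < b)) |
        ((h : Equiv.Perm L) : L → L) z = z}) := hV.preimage econt
    have h1U : (1 : ↥(relAut (fun a b : Q => (a : L) < b))) ∈
        ⇑e ⁻¹' {h : ↥(relAut (fun a b : L => a < b)) |
        ((h : Equiv.Perm L) : L → L) z = z} := by
      have he1 : e 1 = 1 := map_one e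
      simp only [Set.mem_preimage, Set.mem_setOf_eq, he1]
      rfl
    obtain ⟨U₁, hU₁open, hU₁eq⟩ := isOpen_induced_iff.1 hU
    obtain ⟨U₂, hU₂open, hU₂eq⟩ := isOpen_induced_iff.1 hU₁open
    have hid₁ : (1 : Equiv.Perm ↥Q) ∈ U₁ := by
      rw [← hU₁eq] at h1U
      exact h1U
    have hid₂ : ((1 : Equiv.Perm ↥Q) : ↥Q → ↥Q) ∈ U₂ := by
      rw [← hU₂eq] at hid₁
      exact hid₁
    obtain ⟨I, uu, hIu, hIsub⟩ := isOpen_pi_iff.1 hU₂open _ hid₂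
    refine ⟨I.image (fun q => ι q), ?_⟩
    intro w hw
    have hTfix : ∀ i ∈ I, (Tperm w) i = i := by
      intro i hi
      have hP : ι i ∈ I.image (fun q => ι q) := Finset.mem_image_of_mem _ hi
      have hwfix : w (ι i) = ι i := hw _ hP
      rw [hTapp, hwfix]
      exact ι.symm_apply_apply i
    have hmem₂ : ((Tperm w : Equiv.Perm ↥Q) : ↥Q → ↥Q) ∈ Set.pi ↑I uu := by
      intro i hi
      have h2 := (hIu i hi).2
      have : ((Tperm w : Equiv.Perm ↥Q) : ↥Q → ↥Q) i = i := hTfix i hi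
      rw [this]
      simpa using h2
    have hmem₁ : (Tperm w : Equiv.Perm ↥Q) ∈ U₁ := by
      rw [← hU₂eq]
      exact hIsub hmem₂
    have hmemU : (⟨Tperm w, hTmem w⟩ : ↥(relAut (fun a b : Q => (a : L) < b))) ∈
        ⇑e ⁻¹' {h : ↥(relAut (fun a b : L => a < b)) |
        ((h : Equiv.Perm L) : L → L) z = z} := by
      rw [← hU₁eq]
      exact hmem₁
    exact hmemU
  exact NotUniv.main_contra κ hκ huniv hhom ε hmul hone hsupp hmove
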